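/- Let A be the adjacency matrix of a graph G on n vertices and Q a regular orthogonal matrix with B = QᵀAQ the adjacency matrix of a graph H. Then for every monic integer polynomial f, we have Qᵀ f(A) e = f(B) e, where e is the all-ones vector. In particular, if f(A)e ≡ 0 (mod p) for a prime p, and Q has level coprime to p, then f(B)e ≡ 0 (mod p). -/

import Mathlib

open Matrix

def IsAdjacency {n : ℕ} (M : Matrix (Fin n) (Fin n) ℚ) : Prop :=
  Mᵀ = M ∧ (∀ i, M i i = 0) ∧ (∀ i j, M i j = 0 ∨ M i j = 1)

def IsLevel {n : ℕ} (ℓ : ℕ) (Q : Matrix (Fin n) (Fin n) ℚ) : Prop :=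
  0 < ℓ ∧ (∀ i j, ∃ z : ℤ, (ℓ : ℚ) * Q i j = (z : ℚ)) ∧
    ∀ k : ℕ, 0 < k → (∀ i j, ∃ z : ℤ, (k : ℚ) * Q i j = (z : ℚ)) → ℓ ≤ k

lemma myconj_pow {n : ℕ} (Q A : Matrix (Fin n) (Fin n) ℚ) (h1 : Qᵀ * Q = 1)
    (h2 : Q * Qᵀ = 1) (k : ℕ) : (Qᵀ * A * Q) ^ k = Qᵀ * A ^ k * Q := by
  induction k with
  | zero => simp [h1]
  | succ m ih =>
    rw [pow_succ, ih, pow_succ]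
    calc Qᵀ * A ^ m * Q * (Qᵀ * A * Q) = Qᵀ * A ^ m * (Q * Qᵀ) * (A * Q) := by
          noncomm_ring
      _ = Qᵀ * (A ^ m * A) * Q := by rw [h2]; noncomm_ring

lemma myaeval_conj {n : ℕ} (Q A : Matrix (Fin n) (Fin n) ℚ) (h1 : Qᵀ * Q = 1)
    (f : Polynomial ℤ) :
    Polynomial.aeval (Qᵀ * A * Q) f = Qᵀ * Polynomial.aeval A f * Q := by
  have h2 : Q * Qᵀ = 1 := mul_eq_one_comm.mp h1
  induction f using Polynomial.induction_on' with
  | add p q hp hq => simp [map_add, hp, hq, mul_add, add_mul]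
  | monomial k a =>
    rw [Polynomial.aeval_monomial, Polynomial.aeval_monomial, myconj_pow Q A h1 h2]
    simp only [algebraMap_int_eq, eq_intCast]
    rw [← mul_assoc Qᵀ, ← (Int.cast_commute a Qᵀ).eq]
    noncomm_ring

theorem stmt19 (n : ℕ) (A B : Matrix (Fin n) (Fin n) ℚ)
    (hA : IsAdjacency A) (hB : IsAdjacency B)
    (Q : Matrix (Fin n) (Fin n) ℚ)
    (hO : Qᵀ * Q = 1) (hreg : Q.mulVec (fun _ => 1) = fun _ => 1)
    (hQ : B = Qᵀ * A * Q)
    (f : Polynomial ℤ) (hf : f.Monic) :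
    (Qᵀ.mulVec ((Polynomial.aeval A f).mulVec (fun _ => 1)) =
      (Polynomial.aeval B f).mulVec (fun _ => 1)) ∧
    (∀ (p : ℕ), p.Prime →
      (∀ i, ∃ z : ℤ, ((Polynomial.aeval A f).mulVec (fun _ => 1)) i = (p : ℚ) * z) →
      ∀ ℓ : ℕ, IsLevel ℓ Q → Nat.Coprime ℓ p →
      ∀ i, ∃ z : ℤ, ((Polynomial.aeval B f).mulVec (fun _ => 1)) i = (p : ℚ) * z) := by
  have hBc : Polynomial.aeval B f = Qᵀ * Polynomial.aeval A f * Q := by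
    rw [hQ]; exact myaeval_conj Q A hO f
  have heq : Qᵀ.mulVec ((Polynomial.aeval A f).mulVec (fun _ => 1)) =
      (Polynomial.aeval B f).mulVec (fun _ => 1) := by
    rw [hBc, Matrix.mul_assoc, ← Matrix.mulVec_mulVec, ← Matrix.mulVec_mulVec, hreg]
  refine ⟨heq, ?_⟩
  intro p hp hAe ℓ hL hcop i
  obtain ⟨hℓpos, hℓint, -⟩ := hL
  -- integer model of B
  set B₀ : Matrix (Fin n) (Fin n) ℤ := fun i j => if B i j = 1 then 1 else 0 with hB₀def
  have hB0 : B₀.map (fun x : ℤ => (x : ℚ)) = B := by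
    ext a b
    rcases hB.2.2 a b with h | h <;> (rw [Matrix.map_apply]; simp [hB₀def, h])
  have hmapeq : Polynomial.aeval B f =
      (Polynomial.aeval B₀ f).map (fun x : ℤ => (x : ℚ)) := by
    have := Polynomial.aeval_algHom_apply
      ((Int.castRingHom ℚ).mapMatrix.toIntAlgHom) B₀ f
    simp [RingHom.mapMatrix, hB0] at this
    convert this <;> first | rfl | exact Subsingleton.elim _ _
  set c : ℤ := ∑ j, (Polynomial.aeval B₀ f) i j with hcdef
  have hc : ((Polynomial.aeval B f).mulVec (fun _ => 1)) i = (c : ℚ) := by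
    rw [hmapeq]
    simp [Matrix.mulVec, dotProduct, Matrix.map_apply, hcdef]
  set v := (Polynomial.aeval A f).mulVec (fun _ => 1) with hvdef
  choose z hz using hAe
  choose w hw using fun j => hℓint j i
  have key : (ℓ : ℚ) * (c : ℚ) = (((p : ℤ) * ∑ j, w j * z j : ℤ) : ℚ) := by
    rw [← hc, ← heq]
    have : Qᵀ.mulVec v i = ∑ j, Q j i * ((p : ℚ) * z j) := by
      show ∑ j, Qᵀ i j * v j = _
      refine Finset.sum_congr rfl fun j _ => ?_
      rw [Matrix.transpose_apply, hz j]
    rw [this, Finset.mul_sum]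
    push_cast
    rw [Finset.mul_sum]
    refine Finset.sum_congr rfl fun j _ => ?_
    have := hw j
    calc (ℓ : ℚ) * (Q j i * ((p : ℚ) * z j)) = ((ℓ : ℚ) * Q j i) * ((p : ℚ) * z j) := by
          ring
      _ = (w j : ℚ) * ((p : ℚ) * z j) := by rw [hw j]
      _ = (p : ℚ) * ((w j : ℚ) * z j) := by ring
  have keyZ : (ℓ : ℤ) * c = (p : ℤ) * ∑ j, w j * z j := by exact_mod_cast key
  have hdvd : (p : ℤ) ∣ (ℓ : ℤ) * c := ⟨_, keyZ⟩
  have hpp : Prime (p : ℤ) := Nat.prime_iff_prime_int.mp hp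
  rcases hpp.dvd_mul.mp hdvd with h | h
  · exfalso
    have : p ∣ ℓ := Int.natCast_dvd_natCast.mp h
    exact hp.one_lt.ne' (Nat.Coprime.eq_one_of_dvd hcop.symm this)
  · obtain ⟨d, hd⟩ := h
    exact ⟨d, by rw [hc, hd]; push_cast; ring⟩
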